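/- Let p be a prime number and let φ : A → S be a homomorphism of commutative rings such that A is Noetherian, both A and S are p-adically complete (complete and separated for the topology defined by powers of the ideal (p)), and p is a nonzerodivisor on both A and S. If for every integer k > 0 the ring S/p^kS is flat as a module over A/p^kA, then S is flat as an A-module. -/

import Mathlib

open TensorProduct LinearMap

/-- The statement that `S/rS` is flat as a module over `R/rR`, where the module structure is
induced by the ring homomorphism `R/rR → S/rS` obtained from `φ : R → S`. -/
def QuotSpanFlat {R S : Type*} [CommRing R] [CommRing S] (φ : R →+* S) (r : R) : Prop :=
  letI : Algebra (R ⧸ Ideal.span {r}) (S ⧸ Ideal.span {φ r}) :=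
    (Ideal.quotientMap (Ideal.span {φ r}) φ (by
      rw [Ideal.span_singleton_le_iff_mem, Ideal.mem_comap]
      exact Ideal.mem_span_singleton_self _)).toAlgebra
  Module.Flat (R ⧸ Ideal.span {r}) (S ⧸ Ideal.span {φ r})

theorem flatKer {R M : Type*} [CommRing R] [AddCommGroup M] [Module R M]
    [Module.Flat R M] {t b : ℕ} (G : Matrix (Fin t) (Fin b) R) (w : Fin b → M)
    (hw : ∀ i, ∑ j, G i j • w j = 0) :
    ∃ (n : ℕ) (κ : Fin n → Fin b → R) (y : Fin n → M),
      (∀ k i, ∑ j, G i j * κ k j = 0) ∧ (∀ j, w j = ∑ k, κ k j • y k) := by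
  classical
  set F : (Fin b → R) →ₗ[R] (Fin t → R) := G.mulVecLin with hF
  set eb := TensorProduct.piScalarRight R R M (Fin b) with heb
  set et := TensorProduct.piScalarRight R R M (Fin t) with het
  have key : ∀ (v : M ⊗[R] (Fin b → R)) (i : Fin t),
      et (F.lTensor M v) i = ∑ j, G i j • eb v j := by
    intro v
    induction v using TensorProduct.induction_on with
    | zero => intro i; simp
    | tmul m f =>
      intro i
      rw [heb, het, lTensor_tmul]
      rw [TensorProduct.piScalarRight_apply, TensorProduct.piScalarRight_apply,
        TensorProduct.piScalarRightHom_tmul, TensorProduct.piScalarRightHom_tmul]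
      simp only [hF, Matrix.mulVecLin_apply, Matrix.mulVec, dotProduct]
      rw [Finset.sum_smul]
      exact Finset.sum_congr rfl fun j _ => mul_smul _ _ _
    | add v₁ v₂ h₁ h₂ =>
      intro i
      rw [map_add, map_add, Pi.add_apply, h₁ i, h₂ i, map_add, ← Finset.sum_add_distrib]
      simp [smul_add]
  set W : M ⊗[R] (Fin b → R) := eb.symm w with hW
  have hW0 : F.lTensor M W = 0 := by
    apply et.injective
    rw [map_zero]
    ext i
    rw [key W i]
    simp only [hW, LinearEquiv.apply_symm_apply]
    simpa using hw i
  have exact := Module.Flat.lTensor_exact (M := M) (LinearMap.exact_subtype_ker_map F)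
  obtain ⟨Ω, hΩ⟩ := (exact W).mp hW0
  obtain ⟨s, hs⟩ := TensorProduct.exists_finset Ω
  refine ⟨s.card, fun k => ((s.equivFin.symm k : M × ↥(ker F)).2 : Fin b → R),
    fun k => (s.equivFin.symm k : M × ↥(ker F)).1, ?_, ?_⟩
  · intro k i
    have hker := ((s.equivFin.symm k : M × ↥(ker F)).2).2
    rw [LinearMap.mem_ker] at hker
    have := congrFun hker i
    simp only [hF, Matrix.mulVecLin_apply, Matrix.mulVec, dotProduct, Pi.zero_apply] at this
    simpa using this
  · intro j
    have hw' : w = eb W := by rw [hW, LinearEquiv.apply_symm_apply]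
    rw [hw', ← hΩ, hs]
    rw [map_sum, map_sum]
    have : ∀ q : M × ↥(ker F),
        eb ((lTensor M (ker F).subtype) (q.1 ⊗ₜ q.2)) j = ((q.2 : Fin b → R) j) • q.1 := by
      intro q
      rw [lTensor_tmul, heb, TensorProduct.piScalarRight_apply,
        TensorProduct.piScalarRightHom_tmul]
      rfl
    rw [Finset.sum_apply]
    rw [Finset.sum_congr rfl (fun q _ => this q)]
    rw [← Finset.sum_attach s (fun q => ((q.2 : Fin b → R) j) • q.1), ← Finset.univ_eq_attach]
    exact (Equiv.sum_comp s.equivFin.symm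
      (fun q : {x // x ∈ s} => ((q : M × ↥(ker F)).2 : Fin b → R) j • (q : M × ↥(ker F)).1)).symm

theorem pi_mem_span_smul_top {A : Type*} [CommRing A] {t : ℕ} (x : A) (v : Fin t → A) :
    v ∈ (Ideal.span {x} • ⊤ : Submodule A (Fin t → A)) ↔ ∀ i, ∃ a, v i = x * a := by
  constructor
  · intro hv
    refine Submodule.smul_induction_on hv (fun r hr n _ => ?_) (fun v₁ v₂ h₁ h₂ => ?_)
    · intro i
      obtain ⟨a, ha⟩ := Ideal.mem_span_singleton'.mp hr
      refine ⟨a * n i, ?_⟩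
      simp only [Pi.smul_apply, smul_eq_mul, ← ha]
      ring
    · intro i
      obtain ⟨a₁, ha₁⟩ := h₁ i
      obtain ⟨a₂, ha₂⟩ := h₂ i
      exact ⟨a₁ + a₂, by simp [ha₁, ha₂, mul_add]⟩
  · intro hv
    have hv' : v = ∑ i, Pi.single i (v i) := by
      ext j; simp [Pi.single_apply, Finset.sum_ite_eq']
    rw [hv']
    refine Submodule.sum_mem _ fun i _ => ?_
    obtain ⟨a, ha⟩ := hv i
    have h2 : (Pi.single i (v i) : Fin t → A) = x • (Pi.single i a : Fin t → A) := by
      ext j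
      by_cases h : j = i <;> simp [Pi.single_apply, h, ha]
    rw [h2]
    exact Submodule.smul_mem_smul (Ideal.mem_span_singleton_self x) trivial

theorem ARlem {A : Type*} [CommRing A] [IsNoetherianRing A] (q : A) {t b : ℕ}
    (F : Matrix (Fin t) (Fin b) A) :
    ∃ c : ℕ, ∀ (m : ℕ) (κ : Fin b → A), (∀ i, ∃ a, F.mulVec κ i = q ^ (m + c) * a) →
      ∃ ζ lam : Fin b → A, F.mulVec ζ = 0 ∧ (∀ j, ∃ a, lam j = q ^ m * a) ∧ κ = ζ + lam := by
  classical
  set N : Submodule A (Fin t → A) := LinearMap.range F.mulVecLin with hN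
  obtain ⟨c, hc⟩ := Ideal.exists_pow_inf_eq_pow_smul (Ideal.span {q}) N
  refine ⟨c, fun m κ hκ => ?_⟩
  have h1 : F.mulVec κ ∈ (Ideal.span {q}) ^ (m + c) • ⊤ ⊓ N := by
    constructor
    · rw [Ideal.span_singleton_pow]
      exact (pi_mem_span_smul_top _ _).mpr hκ
    · exact ⟨κ, rfl⟩
  rw [hc (m + c) (Nat.le_add_left c m)] at h1
  have h2 : F.mulVec κ ∈ (Ideal.span {q}) ^ m • N := by
    have := Submodule.smul_mono (le_refl ((Ideal.span {q} : Ideal A) ^ (m + c - c))) inf_le_right h1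
    simpa [Nat.add_sub_cancel] using this
  rw [hN, ← Submodule.map_top, ← Submodule.map_smul''] at h2
  obtain ⟨κ', hκ'top, hκ'⟩ := h2
  refine ⟨κ - κ', κ', ?_, ?_, by ring⟩
  · have : F.mulVec (κ - κ') = F.mulVec κ - F.mulVec κ' := by
      simp [Matrix.mulVec_sub]
    rw [this, ← hκ']
    simp [Matrix.mulVecLin_apply]
  · intro j
    have : κ' ∈ (Ideal.span {q ^ m} • ⊤ : Submodule A (Fin b → A)) := by
      rw [← Ideal.span_singleton_pow]; exact hκ'top
    exact (pi_mem_span_smul_top _ _).mp this j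

theorem mem_span_pow_smul_top_iff {S : Type*} [CommRing S] (x : S) (m : ℕ) (v : S) :
    v ∈ ((Ideal.span {x}) ^ m • ⊤ : Submodule S S) ↔ ∃ a, v = x ^ m * a := by
  rw [smul_eq_mul, Ideal.mul_top, Ideal.span_singleton_pow, Ideal.mem_span_singleton']
  constructor
  · rintro ⟨a, rfl⟩; exact ⟨a, (mul_comm _ _)⟩
  · rintro ⟨a, rfl⟩; exact ⟨a, (mul_comm _ _)⟩

set_option maxHeartbeats 1000000 in
theorem master {A S : Type*} [CommRing A] [CommRing S] [IsNoetherianRing A]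
    (p : ℕ) (φ : A →+* S)
    (hflat : ∀ k : ℕ, 0 < k → QuotSpanFlat φ ((p : A) ^ k))
    {t b : ℕ} (F : Matrix (Fin t) (Fin b) A) :
    ∃ c : ℕ, ∀ (m : ℕ) (w : Fin b → S),
      (∀ i, ∃ s, ∑ j, φ (F i j) * w j = (p : S) ^ (m + c) * s) →
      ∃ (n : ℕ) (ζ : Fin n → Fin b → A) (y : Fin n → S) (v : Fin b → S),
        (∀ k, F.mulVec (ζ k) = 0) ∧
        (∀ j, w j = (∑ k, φ (ζ k j) * y k) + (p : S) ^ m * v j) := by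
  classical
  obtain ⟨c₀, hc₀⟩ := ARlem ((p : A)) F
  refine ⟨c₀ + 1, fun m w hw => ?_⟩
  set k := m + (c₀ + 1) with hk
  have hkpos : 0 < k := by omega
  set IA : Ideal A := Ideal.span {(p : A) ^ k} with hIA
  set IS : Ideal S := Ideal.span {φ ((p : A) ^ k)} with hIS
  letI : Algebra (A ⧸ IA) (S ⧸ IS) :=
    (Ideal.quotientMap IS φ (by
      rw [Ideal.span_singleton_le_iff_mem, Ideal.mem_comap]
      exact Ideal.mem_span_singleton_self _)).toAlgebra
  haveI hfl : Module.Flat (A ⧸ IA) (S ⧸ IS) := hflat k hkpos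
  have hφp : φ ((p : A) ^ k) = (p : S) ^ k := by
    rw [map_pow, map_natCast]
  -- the reduced system
  set G : Matrix (Fin t) (Fin b) (A ⧸ IA) := fun i j => Ideal.Quotient.mk IA (F i j) with hG
  set wbar : Fin b → (S ⧸ IS) := fun j => Ideal.Quotient.mk IS (w j) with hwbar
  have hsmul : ∀ (a : A) (s : S),
      (Ideal.Quotient.mk IA a) • (Ideal.Quotient.mk IS s) = Ideal.Quotient.mk IS (φ a * s) := by
    intro a s
    rw [Algebra.smul_def, RingHom.algebraMap_toAlgebra, Ideal.quotientMap_mk, ← map_mul]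
  have hwbar0 : ∀ i, ∑ j, G i j • wbar j = 0 := by
    intro i
    obtain ⟨s, hs⟩ := hw i
    have : ∑ j, G i j • wbar j = Ideal.Quotient.mk IS (∑ j, φ (F i j) * w j) := by
      rw [map_sum]
      exact Finset.sum_congr rfl fun j _ => hsmul _ _
    rw [this, hs, Ideal.Quotient.eq_zero_iff_mem]
    refine Ideal.mem_span_singleton'.mpr ⟨s, ?_⟩
    rw [hφp]; ring
  obtain ⟨n, κbar, ybar, hκrel, hwrep⟩ := flatKer G wbar (by exact hwbar0)
  choose κ' hκ' using fun kk j => Ideal.Quotient.mk_surjective (I := IA) (κbar kk j)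
  choose y' hy' using fun kk => Ideal.Quotient.mk_surjective (I := IS) (ybar kk)
  -- the lifted relations are approximate
  have hrel : ∀ kk i, ∃ a, F.mulVec (κ' kk) i = (p : A) ^ ((m + 1) + c₀) * a := by
    intro kk i
    have h0 : Ideal.Quotient.mk IA (∑ j, F i j * κ' kk j) = 0 := by
      rw [map_sum]
      have : ∀ j, Ideal.Quotient.mk IA (F i j * κ' kk j) = G i j * κbar kk j := by
        intro j; rw [map_mul, hκ']
      rw [Finset.sum_congr rfl fun j _ => this j]
      exact hκrel kk i
    rw [Ideal.Quotient.eq_zero_iff_mem] at h0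
    obtain ⟨a, ha⟩ := Ideal.mem_span_singleton'.mp h0
    refine ⟨a, ?_⟩
    have hmv : F.mulVec (κ' kk) i = ∑ j, F i j * κ' kk j := by
      simp [Matrix.mulVec, dotProduct]
    rw [hmv, ← ha]
    have : k = (m + 1) + c₀ := by omega
    rw [this]; ring
  choose ζ lam hζ0 hlam hκζ using fun kk => hc₀ (m + 1) (κ' kk) (hrel kk)
  choose a' ha' using fun kk => hlam kk
  -- main congruence
  have hmain : ∀ j, ∃ s, w j - ∑ kk, φ (κ' kk j) * y' kk = (p : S) ^ k * s := by
    intro j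
    have h1 : Ideal.Quotient.mk IS (w j - ∑ kk, φ (κ' kk j) * y' kk) = 0 := by
      rw [map_sub, map_sum]
      have : ∀ kk, Ideal.Quotient.mk IS (φ (κ' kk j) * y' kk) = κbar kk j • ybar kk := by
        intro kk; rw [← hκ' kk j, ← hy' kk, hsmul]
      rw [Finset.sum_congr rfl fun kk _ => this kk]
      have h2 : Ideal.Quotient.mk IS (w j) = ∑ kk, κbar kk j • ybar kk := hwrep j
      rw [h2, sub_self]
    rw [Ideal.Quotient.eq_zero_iff_mem] at h1
    obtain ⟨s, hs⟩ := Ideal.mem_span_singleton'.mp h1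
    exact ⟨s, by rw [← hs, hφp]; ring⟩
  choose s' hs' using hmain
  refine ⟨n, ζ, y', fun j => (∑ kk, (p : S) * φ (a' kk j) * y' kk) + (p : S) ^ (c₀ + 1) * s' j,
    hζ0, fun j => ?_⟩
  have e2 : ∀ kk, φ (κ' kk j) * y' kk
      = φ (ζ kk j) * y' kk + (p : S) ^ m * ((p : S) * φ (a' kk j) * y' kk) := by
    intro kk
    have hsplit : κ' kk j = ζ kk j + lam kk j := by rw [hκζ kk]; rfl
    rw [hsplit, map_add, ha' kk j, map_mul, map_pow, map_natCast]
    ring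
  calc w j = ∑ kk, φ (κ' kk j) * y' kk + (p : S) ^ k * s' j := by rw [← sub_eq_iff_eq_add'.mp (hs' j)]  
    _ = ∑ kk, (φ (ζ kk j) * y' kk + (p : S) ^ m * ((p : S) * φ (a' kk j) * y' kk))
        + (p : S) ^ m * ((p : S) ^ (c₀ + 1) * s' j) := by
        rw [Finset.sum_congr rfl fun kk _ => e2 kk, hk, pow_add, mul_assoc]
    _ = (∑ kk, φ (ζ kk j) * y' kk)
        + (p : S) ^ m * ((∑ kk, (p : S) * φ (a' kk j) * y' kk) + (p : S) ^ (c₀ + 1) * s' j) := by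
        rw [Finset.sum_add_distrib, mul_add, Finset.mul_sum, add_assoc]

theorem closureLem {A S : Type*} [CommRing A] [CommRing S] [IsNoetherianRing A]
    (p : ℕ) (φ : A →+* S)
    (hScomplete : IsAdicComplete (Ideal.span {(p : S)}) S)
    (hflat : ∀ k : ℕ, 0 < k → QuotSpanFlat φ ((p : A) ^ k))
    {b r : ℕ} (u : Matrix (Fin b) (Fin r) A) (w : Fin b → S)
    (h : ∀ m : ℕ, ∃ z : Fin r → S, ∀ j, ∃ s, w j - (∑ l, φ (u j l) * z l) = (p : S) ^ m * s) :
    ∃ z : Fin r → S, ∀ j, w j = ∑ l, φ (u j l) * z l := by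
  classical
  obtain ⟨c, hmaster⟩ := master p φ hflat u
  choose z hz using h
  set Z : ℕ → Fin r → S := fun m => z (m + c) with hZ
  have hZw : ∀ m j, ∃ s, w j - (∑ l, φ (u j l) * Z m l) = (p : S) ^ (m + c) * s := by
    intro m j; exact hz (m + c) j
  -- small corrections with the same image
  have hstep : ∀ m : ℕ, ∃ d : Fin r → S, (∀ l, ∃ a, d l = (p : S) ^ m * a) ∧
      (∀ j, ∑ l, φ (u j l) * d l = ∑ l, φ (u j l) * (Z (m + 1) l - Z m l)) := by
    intro m
    have hδ : ∀ j, ∃ s, ∑ l, φ (u j l) * (Z (m + 1) l - Z m l) = (p : S) ^ (m + c) * s := by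
      intro j
      obtain ⟨s₁, hs₁⟩ := hZw m j
      obtain ⟨s₂, hs₂⟩ := hZw (m + 1) j
      refine ⟨s₁ - (p : S) * s₂, ?_⟩
      have : ∑ l, φ (u j l) * (Z (m + 1) l - Z m l)
          = (w j - ∑ l, φ (u j l) * Z m l) - (w j - ∑ l, φ (u j l) * Z (m + 1) l) := by
        rw [Finset.sum_congr rfl fun l (_ : l ∈ Finset.univ) => mul_sub (φ (u j l)) _ _,
          Finset.sum_sub_distrib]
        ring
      rw [this, hs₁, hs₂]
      have : (m + 1) + c = (m + c) + 1 := by omega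
      rw [this, pow_succ]
      ring
    obtain ⟨n, ζ, y, v, hζ0, hrep⟩ := hmaster m (fun l => Z (m + 1) l - Z m l) hδ
    refine ⟨fun l => (p : S) ^ m * v l, fun l => ⟨v l, rfl⟩, fun j => ?_⟩
    have hK : ∑ l, φ (u j l) * ∑ k, φ (ζ k l) * y k = 0 := by
      have e1 : ∀ l, φ (u j l) * ∑ k, φ (ζ k l) * y k = ∑ k, (φ (u j l) * φ (ζ k l)) * y k := by
        intro l; rw [Finset.mul_sum]; exact Finset.sum_congr rfl fun k _ => by ring
      rw [Finset.sum_congr rfl fun l (_ : l ∈ Finset.univ) => e1 l, Finset.sum_comm]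
      have e2 : ∀ k, ∑ l, (φ (u j l) * φ (ζ k l)) * y k = 0 := by
        intro k
        rw [← Finset.sum_mul]
        have e3 : ∑ l, φ (u j l) * φ (ζ k l) = φ (∑ l, u j l * ζ k l) := by
          rw [map_sum]; exact Finset.sum_congr rfl fun l _ => (map_mul φ _ _).symm
        have e4 : ∑ l, u j l * ζ k l = 0 := by
          have := congrFun (hζ0 k) j
          simpa [Matrix.mulVec, dotProduct] using this
        rw [e3, e4, map_zero, zero_mul]
      rw [Finset.sum_congr rfl fun k (_ : k ∈ Finset.univ) => e2 k, Finset.sum_const_zero]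
    have hthis : ∀ l, Z (m + 1) l - Z m l = (∑ k, φ (ζ k l) * y k) + (p : S) ^ m * v l :=
      fun l => hrep l
    have e5 : ∀ l, φ (u j l) * (Z (m + 1) l - Z m l)
        = φ (u j l) * ∑ k, φ (ζ k l) * y k + φ (u j l) * ((p : S) ^ m * v l) := by
      intro l; rw [hthis l]; ring
    refine Eq.symm ?_
    rw [Finset.sum_congr rfl fun l (_ : l ∈ Finset.univ) => e5 l, Finset.sum_add_distrib, hK,
      zero_add]
  choose d hdsmall hdimg using hstep
  set zhat : ℕ → Fin r → S := fun m l => Z 0 l + ∑ i ∈ Finset.range m, d i l with hzhat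
  have himg : ∀ m j, ∑ l, φ (u j l) * zhat m l = ∑ l, φ (u j l) * Z m l := by
    intro m
    induction m with
    | zero => intro j; simp [hzhat]
    | succ m ih =>
      intro j
      have e1 : ∀ l, zhat (m + 1) l = zhat m l + d m l := by
        intro l; rw [hzhat]; simp [Finset.sum_range_succ]; ring
      rw [Finset.sum_congr rfl fun l _ => by rw [e1 l, mul_add]]
      rw [Finset.sum_add_distrib, ih j, hdimg m j]
      rw [← Finset.sum_add_distrib]
      rw [Finset.sum_congr rfl fun l (_ : l ∈ Finset.univ) => (mul_add (φ (u j l)) _ _).symm]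
      exact Finset.sum_congr rfl fun l _ => by ring_nf
  -- Cauchy property and limit
  have hcauchy : ∀ l, ∀ {m n : ℕ}, m ≤ n →
      zhat m l ≡ zhat n l [SMOD ((Ideal.span {(p : S)}) ^ m • ⊤ : Submodule S S)] := by
    intro l m n hmn
    rw [SModEq.sub_mem]
    have : zhat m l - zhat n l = -∑ i ∈ Finset.Ico m n, d i l := by
      rw [hzhat]
      simp only []
      rw [← Finset.sum_range_add_sum_Ico _ hmn]
      ring
    rw [this]
    refine neg_mem (Submodule.sum_mem _ fun i hi => ?_)
    obtain ⟨a, ha⟩ := hdsmall i l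
    rw [mem_span_pow_smul_top_iff]
    obtain ⟨him, -⟩ := Finset.mem_Ico.mp hi
    refine ⟨(p : S) ^ (i - m) * a, ?_⟩
    rw [ha, ← mul_assoc, ← pow_add]
    congr 2
    omega
  have hlim : ∀ l, ∃ L, ∀ n, zhat n l ≡ L [SMOD ((Ideal.span {(p : S)}) ^ n • ⊤ : Submodule S S)] :=
    fun l => hScomplete.toIsPrecomplete.prec (fun {m n} hmn => hcauchy l hmn)
  choose L hL using hlim
  refine ⟨L, fun j => ?_⟩
  have hzero : ∀ n : ℕ, w j - ∑ l, φ (u j l) * L l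
      ≡ 0 [SMOD ((Ideal.span {(p : S)}) ^ n • ⊤ : Submodule S S)] := by
    intro n
    rw [SModEq.zero, mem_span_pow_smul_top_iff]
    obtain ⟨s, hs⟩ := hZw n j
    have hLd : ∀ l, ∃ a, zhat n l - L l = (p : S) ^ n * a := by
      intro l
      have := (SModEq.sub_mem).mp (hL l n)
      rw [mem_span_pow_smul_top_iff] at this
      exact this
    choose a ha using hLd
    refine ⟨(p : S) ^ c * s + ∑ l, φ (u j l) * a l, ?_⟩
    have e : w j - ∑ l, φ (u j l) * L l
        = (w j - ∑ l, φ (u j l) * Z n l) + ∑ l, φ (u j l) * (zhat n l - L l) := by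
      have e2 : ∑ l, φ (u j l) * (zhat n l - L l)
          = ∑ l, φ (u j l) * zhat n l - ∑ l, φ (u j l) * L l := by
        rw [← Finset.sum_sub_distrib]
        exact Finset.sum_congr rfl fun l _ => by ring
      rw [e2, himg n j]
      ring
    have e6 : ∀ l, φ (u j l) * (zhat n l - L l) = (p : S) ^ n * (φ (u j l) * a l) := by
      intro l; rw [ha l]; ring
    rw [e, hs, Finset.sum_congr rfl fun l (_ : l ∈ Finset.univ) => e6 l, ← Finset.mul_sum,
      mul_add, pow_add]
    ring
  have := hScomplete.toIsHausdorff.haus _ hzero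
  have h0 : w j - ∑ l, φ (u j l) * L l = 0 := this
  exact sub_eq_zero.mp h0

/-- Let `p` be a prime and `φ : A → S` a ring homomorphism, with `A` Noetherian, both `A` and
`S` `p`-adically complete, and `p` a nonzerodivisor on both `A` and `S`. If `S/p^kS` is flat
over `A/p^kA` for all `k > 0`, then `S` is flat over `A`. -/
theorem flat_of_flat_mod_p_pow {A S : Type*} [CommRing A] [CommRing S] [IsNoetherianRing A]
    (p : ℕ) (hp : p.Prime) (φ : A →+* S)
    (hAcomplete : IsAdicComplete (Ideal.span {(p : A)}) A)
    (hScomplete : IsAdicComplete (Ideal.span {(p : S)}) S)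
    (hAnzd : (p : A) ∈ nonZeroDivisors A)
    (hSnzd : (p : S) ∈ nonZeroDivisors S)
    (hflat : ∀ k : ℕ, 0 < k → QuotSpanFlat φ ((p : A) ^ k)) :
    letI : Algebra A S := φ.toAlgebra
    Module.Flat A S := by
  classical
  letI : Algebra A S := φ.toAlgebra
  show Module.Flat A S
  rw [Module.Flat.iff_lift_lsmul_comp_subtype_injective]
  intro I _
  rw [injective_iff_map_eq_zero]
  intro x hx
  obtain ⟨sf, hsf⟩ := TensorProduct.exists_finset x
  set b := sf.card with hb
  set a : Fin b → ↥I := fun i => ((sf.equivFin.symm i : ↥I × S)).1 with ha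
  set xs : Fin b → S := fun i => ((sf.equivFin.symm i : ↥I × S)).2 with hxs
  have hxrep : x = ∑ i : Fin b, (a i) ⊗ₜ[A] (xs i) := by
    rw [hsf, ← Finset.sum_attach sf (fun q => q.1 ⊗ₜ[A] q.2), ← Finset.univ_eq_attach]
    exact (Equiv.sum_comp sf.equivFin.symm
      (fun q : {y // y ∈ sf} => (q : ↥I × S).1 ⊗ₜ[A] (q : ↥I × S).2)).symm
  have hsmul : ∀ (c : A) (s : S), c • s = φ c * s := fun c s => by
    rw [Algebra.smul_def, RingHom.algebraMap_toAlgebra]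
  -- the relation ∑ φ(aᵢ) xsᵢ = 0
  have hrel : ∑ i, φ ((a i : A)) * xs i = 0 := by
    have : TensorProduct.lift ((LinearMap.lsmul A S).comp I.subtype) x
        = ∑ i, φ ((a i : A)) * xs i := by
      rw [hxrep, map_sum]
      exact Finset.sum_congr rfl fun i _ => by
        simp [TensorProduct.lift.tmul, hsmul]
    rw [← this, hx]
  -- the coefficient row vector
  set V : Matrix (Fin 1) (Fin b) A := fun _ i => (a i : A) with hV
  -- generators of the syzygy module
  set Z : Submodule A (Fin b → A) := LinearMap.ker V.mulVecLin with hZ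
  obtain ⟨T, hT⟩ := (IsNoetherian.noetherian Z : Z.FG)
  set r := T.card with hr
  set g : Fin r → (Fin b → A) := fun l => (T.equivFin.symm l : Fin b → A) with hg
  have hgZ : ∀ l, g l ∈ Z := by
    intro l
    rw [← hT]
    exact Submodule.subset_span (T.equivFin.symm l).2
  set u : Matrix (Fin b) (Fin r) A := fun j l => g l j with hu
  -- Step A : approximation at every level
  obtain ⟨c, hmaster⟩ := master p φ hflat V
  have hA : ∀ m : ℕ, ∃ zv : Fin r → S, ∀ j, ∃ sv,
      xs j - (∑ l, φ (u j l) * zv l) = (p : S) ^ m * sv := by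
    intro m
    have hhyp : ∀ i : Fin 1, ∃ s, ∑ j, φ (V i j) * xs j = (p : S) ^ (m + c) * s := by
      intro i
      exact ⟨0, by rw [hV]; simpa using hrel⟩
    obtain ⟨n, ζ, y, v, hζ0, hrep⟩ := hmaster m xs hhyp
    -- each ζ k lies in Z = span T
    have hζZ : ∀ k, ζ k ∈ Submodule.span A (T : Set (Fin b → A)) := by
      intro k
      rw [hT]
      rw [hZ, LinearMap.mem_ker]
      exact funext_iff.mpr fun i => congrFun (hζ0 k) i
    have hcoeff : ∀ k, ∃ ρ : (Fin b → A) → A, ∑ gv ∈ T, ρ gv • gv = ζ k :=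
      fun k => (Submodule.mem_span_finset.mp (hζZ k)).imp fun _ h => h.2
    choose ρ hρ using hcoeff
    refine ⟨fun l => ∑ k, φ (ρ k (g l)) * y k, fun j => ⟨v j, ?_⟩⟩
    have key : ∑ l, φ (u j l) * (∑ k, φ (ρ k (g l)) * y k) = ∑ k, φ (ζ k j) * y k := by
      have e1 : ∀ l, φ (u j l) * (∑ k, φ (ρ k (g l)) * y k)
          = ∑ k, φ (ρ k (g l)) * φ (g l j) * y k := by
        intro l
        rw [Finset.mul_sum]
        exact Finset.sum_congr rfl fun k _ => by rw [hu]; ring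
      rw [Finset.sum_congr rfl fun l (_ : l ∈ Finset.univ) => e1 l, Finset.sum_comm]
      refine Finset.sum_congr rfl fun k _ => ?_
      have e2 : ∑ l, φ (ρ k (g l)) * φ (g l j) * y k
          = (∑ l, φ (ρ k (g l) * g l j)) * y k := by
        rw [Finset.sum_mul]
        exact Finset.sum_congr rfl fun l _ => by rw [map_mul]
      rw [e2]
      congr 1
      have e3 : ∑ l, φ (ρ k (g l) * g l j) = φ (∑ l, ρ k (g l) * g l j) := by
        rw [map_sum]
      rw [e3]
      congr 1
      -- ∑ over Fin r equals ∑ over T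
      have e4 : ∑ l, ρ k (g l) * g l j = ∑ gv ∈ T, ρ k gv * gv j := by
        rw [← Finset.sum_attach T (fun gv => ρ k gv * gv j), ← Finset.univ_eq_attach]
        exact Equiv.sum_comp T.equivFin.symm
          (fun gv : {y // y ∈ T} => ρ k (gv : Fin b → A) * (gv : Fin b → A) j)
      rw [e4]
      have e5 : ζ k j = ∑ gv ∈ T, ρ k gv * gv j := by
        have := congrFun (hρ k) j
        rw [← this]
        simp [Finset.sum_apply]
      rw [e5]
    rw [key]
    have := hrep j
    rw [this]
    ring
  -- Step B : exact solution by completeness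
  obtain ⟨zL, hzL⟩ := closureLem p φ hScomplete hflat u xs hA
  -- Step C : conclude x = 0
  rw [hxrep]
  have hterm : ∀ i : Fin b, (a i) ⊗ₜ[A] (xs i) = ∑ l, (g l i • a i) ⊗ₜ[A] zL l := by
    intro i
    rw [hzL i]
    rw [TensorProduct.tmul_sum]
    refine Finset.sum_congr rfl fun l _ => ?_
    rw [hu]
    rw [← hsmul, TensorProduct.tmul_smul, TensorProduct.smul_tmul']
  rw [Finset.sum_congr rfl fun i (_ : i ∈ Finset.univ) => hterm i, Finset.sum_comm]
  refine Finset.sum_eq_zero fun l _ => ?_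
  have hsum0 : (∑ i, g l i • a i) = (0 : ↥I) := by
    have hcoe : ((∑ i, g l i • a i : ↥I) : A) = ∑ i, g l i * (a i : A) := by
      push_cast
      rfl
    have hker : ∑ i, g l i * (a i : A) = 0 := by
      have := hgZ l
      rw [hZ, LinearMap.mem_ker] at this
      have h0 := congrFun this (0 : Fin 1)
      simp only [Matrix.mulVecLin_apply, Matrix.mulVec, dotProduct, hV,
        Pi.zero_apply] at h0
      rw [← h0]
      exact Finset.sum_congr rfl fun i _ => by ring
    exact Subtype.ext (by rw [hcoe, hker]; rfl)
  rw [← TensorProduct.sum_tmul, hsum0, TensorProduct.zero_tmul]
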